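/- If the final zone F of M_•^{F₁,F₂} is contained in ([m]×{0}) ∪ ({0}×[n]), then the set of accessible states of M_•^{F₁,F₂} is strictly contained in the set of valid states. -/

import Mathlib

/-- The final zone `F = (F₁×[n]) • ([m]×F₂)` determined by a binary Boolean
function `b` and final sets `F₁`, `F₂`. -/
def finalZone {m n : ℕ} (b : Bool → Bool → Bool)
    (F₁ : Finset (Fin m)) (F₂ : Finset (Fin n)) : Set (Fin m × Fin n) :=
  {p | b (decide (p.1 ∈ F₁)) (decide (p.2 ∈ F₂)) = true}

/-- The action of a pair of transformations on a tableau: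
`T·(f,g) = {(f i, g j) | (i,j) ∈ T}`. -/
def act {m n : ℕ} (a : (Fin m → Fin m) × (Fin n → Fin n))
    (T : Set (Fin m × Fin n)) : Set (Fin m × Fin n) :=
  (fun p => (a.1 p.1, a.2 p.2)) '' T

open Classical in
/-- One transition of the automaton `M_•^{F₁,F₂}` on tableaux: on `∅` the
letter `(f,g)` produces `{(f 0, g 0)}`, on a nonempty tableau it produces
`T·(f,g)`; in both cases the cross `(0,0)` is added whenever the resulting
tableau meets the final zone `F`. -/
noncomputable def mstep {m n : ℕ} [NeZero m] [NeZero n]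
    (F : Set (Fin m × Fin n)) (a : (Fin m → Fin m) × (Fin n → Fin n))
    (T : Set (Fin m × Fin n)) : Set (Fin m × Fin n) :=
  let T' := if T = ∅ then ({(a.1 0, a.2 0)} : Set (Fin m × Fin n)) else act a T
  if (T' ∩ F).Nonempty then insert ((0 : Fin m), (0 : Fin n)) T' else T'

/-- The extended transition function `δ^w` of `M_•^{F₁,F₂}`. -/
noncomputable def mrun {m n : ℕ} [NeZero m] [NeZero n]
    (F : Set (Fin m × Fin n)) (w : List ((Fin m → Fin m) × (Fin n → Fin n)))
    (T : Set (Fin m × Fin n)) : Set (Fin m × Fin n) :=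
  w.foldl (fun T a => mstep F a T) T



/-- Adjacency within a tableau: two points of `T` sharing a row or a column. -/
def rel {m n : ℕ} (T : Set (Fin m × Fin n)) (a b : Fin m × Fin n) : Prop :=
  a ∈ T ∧ b ∈ T ∧ (a.1 = b.1 ∨ a.2 = b.2)

/-- Row/column connectivity of a tableau. -/
def conn {m n : ℕ} (T : Set (Fin m × Fin n)) : Prop :=
  ∀ ⦃p⦄, p ∈ T → ∀ ⦃q⦄, q ∈ T → Relation.ReflTransGen (rel T) p q

lemma conn_empty {m n : ℕ} : conn (∅ : Set (Fin m × Fin n)) := by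
  intro p hp; exact absurd hp (Set.notMem_empty p)

lemma conn_singleton {m n : ℕ} (p : Fin m × Fin n) : conn ({p} : Set (Fin m × Fin n)) := by
  intro a ha b hb
  rw [Set.mem_singleton_iff] at ha hb
  subst ha; subst hb; exact Relation.ReflTransGen.refl

lemma conn_act {m n : ℕ} (a : (Fin m → Fin m) × (Fin n → Fin n))
    {T : Set (Fin m × Fin n)} (h : conn T) : conn (act a T) := by
  rintro p ⟨x, hx, rfl⟩ q ⟨y, hy, rfl⟩
  refine Relation.ReflTransGen.lift (fun p : Fin m × Fin n => (a.1 p.1, a.2 p.2)) ?_ _ _ (h hx hy)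
  rintro u v ⟨hu, hv, huv⟩
  exact ⟨⟨u, hu, rfl⟩, ⟨v, hv, rfl⟩, huv.imp (fun e => by simp [e]) (fun e => by simp [e])⟩

lemma conn_insert {m n : ℕ} [NeZero m] [NeZero n] {T : Set (Fin m × Fin n)}
    {c : Fin m × Fin n} (hc : c ∈ T) (hcross : c.1 = 0 ∨ c.2 = 0)
    (h : conn T) : conn (insert ((0 : Fin m), (0 : Fin n)) T) := by
  have hmono : ∀ {u v}, rel T u v → rel (insert ((0:Fin m),(0:Fin n)) T) u v := by
    rintro u v ⟨hu, hv, huv⟩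
    exact ⟨Set.mem_insert_of_mem _ hu, Set.mem_insert_of_mem _ hv, huv⟩
  have key : ∀ ⦃q⦄, q ∈ T →
      Relation.ReflTransGen (rel (insert ((0:Fin m),(0:Fin n)) T)) ((0:Fin m),(0:Fin n)) q := by
    intro q hq
    refine Relation.ReflTransGen.head ?_ (Relation.ReflTransGen.mono (fun u v h => hmono h) _ _ (h hc hq))
    refine ⟨Set.mem_insert _ _, Set.mem_insert_of_mem _ hc, ?_⟩
    rcases hcross with e | e
    · exact Or.inl e.symm
    · exact Or.inr e.symm
  intro p hp q hq
  rcases Set.mem_insert_iff.mp hp with rfl | hp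
  · rcases Set.mem_insert_iff.mp hq with rfl | hq
    · exact Relation.ReflTransGen.refl
    · exact key hq
  · rcases Set.mem_insert_iff.mp hq with rfl | hq
    · have hsymm : Symmetric (rel (insert ((0:Fin m),(0:Fin n)) T)) := by
        rintro u v ⟨hu, hv, huv⟩
        exact ⟨hv, hu, huv.imp Eq.symm Eq.symm⟩
      haveI : Std.Symm (rel (insert ((0:Fin m),(0:Fin n)) T)) := ⟨fun u v h => hsymm h⟩
      exact Std.Symm.symm _ _ (key hp)
    · exact Relation.ReflTransGen.mono (fun u v h => hmono h) _ _ (h hp hq)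

lemma conn_mstep {m n : ℕ} [NeZero m] [NeZero n] {F : Set (Fin m × Fin n)}
    (hF : ∀ p ∈ F, p.1 = 0 ∨ p.2 = 0)
    (a : (Fin m → Fin m) × (Fin n → Fin n)) {T : Set (Fin m × Fin n)}
    (h : conn T) : conn (mstep F a T) := by
  classical
  have key : ∀ (S : Set (Fin m × Fin n)), conn S →
      conn (if (S ∩ F).Nonempty then insert ((0:Fin m),(0:Fin n)) S else S) := by
    intro S hS
    split_ifs with htrig
    · obtain ⟨c, hcS, hcF⟩ := htrig
      exact conn_insert hcS (hF c hcF) hS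
    · exact hS
  have hS : conn (if T = ∅ then ({(a.1 0, a.2 0)} : Set (Fin m × Fin n)) else act a T) := by
    split_ifs
    · exact conn_singleton _
    · exact conn_act a h
  exact key _ hS

lemma conn_mrun {m n : ℕ} [NeZero m] [NeZero n] {F : Set (Fin m × Fin n)}
    (hF : ∀ p ∈ F, p.1 = 0 ∨ p.2 = 0)
    (w : List ((Fin m → Fin m) × (Fin n → Fin n))) {T : Set (Fin m × Fin n)}
    (h : conn T) : conn (mrun F w T) := by
  induction w generalizing T with
  | nil => exact h
  | cons a w ih => exact ih (conn_mstep hF a h)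

/-- If the final zone of `M_•^{F₁,F₂}` is contained in
`([m]×{0}) ∪ ({0}×[n])`, then the set of accessible states is strictly
contained in the set of valid states (those `T` with `T ∩ F = ∅` or
`(0,0) ∈ T`). -/
theorem accessible_ssubset_valid (m n : ℕ) (hm : 2 ≤ m) (hn : 2 ≤ n)
    [NeZero m] [NeZero n]
    (b : Bool → Bool → Bool) (F₁ : Finset (Fin m)) (F₂ : Finset (Fin n))
    (hF : ∀ p ∈ finalZone b F₁ F₂, p.1 = 0 ∨ p.2 = 0) :
    {T : Set (Fin m × Fin n) | ∃ w, mrun (finalZone b F₁ F₂) w ∅ = T} ⊂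
      {T : Set (Fin m × Fin n) |
        T ∩ finalZone b F₁ F₂ = ∅ ∨ ((0 : Fin m), (0 : Fin n)) ∈ T} := by
  set F := finalZone b F₁ F₂ with hFdef
  constructor
  · -- accessible ⊆ valid
    rintro T ⟨w, rfl⟩
    rcases w with _ | ⟨a, w⟩
    · left
      simp [mrun]
    · -- validity is preserved through the run
      suffices h : ∀ (w : List ((Fin m → Fin m) × (Fin n → Fin n)))
          (T : Set (Fin m × Fin n)), (T ∩ F = ∅ ∨ ((0:Fin m),(0:Fin n)) ∈ T) →
          (mrun F w T ∩ F = ∅ ∨ ((0:Fin m),(0:Fin n)) ∈ mrun F w T) by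
        have hstep : ∀ (a : (Fin m → Fin m) × (Fin n → Fin n)) (T : Set (Fin m × Fin n)),
            mstep F a T ∩ F = ∅ ∨ ((0:Fin m),(0:Fin n)) ∈ mstep F a T := by
          intro a T
          classical
          have key : ∀ (S : Set (Fin m × Fin n)),
              (if (S ∩ F).Nonempty then insert ((0:Fin m),(0:Fin n)) S else S) ∩ F = ∅ ∨
              ((0:Fin m),(0:Fin n)) ∈
                (if (S ∩ F).Nonempty then insert ((0:Fin m),(0:Fin n)) S else S) := by
            intro S
            split_ifs with htrig
            · exact Or.inr (Set.mem_insert _ _)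
            · exact Or.inl (Set.not_nonempty_iff_eq_empty.mp htrig)
          exact key _
        have : mrun F (a :: w) ∅ = mrun F w (mstep F a ∅) := rfl
        rw [this]
        exact h w _ (hstep a ∅)
      intro w
      induction w with
      | nil => intro T hT; exact hT
      | cons a w ih =>
        intro T _
        have hstep : mstep F a T ∩ F = ∅ ∨ ((0:Fin m),(0:Fin n)) ∈ mstep F a T := by
          classical
          have key : ∀ (S : Set (Fin m × Fin n)),
              (if (S ∩ F).Nonempty then insert ((0:Fin m),(0:Fin n)) S else S) ∩ F = ∅ ∨
              ((0:Fin m),(0:Fin n)) ∈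
                (if (S ∩ F).Nonempty then insert ((0:Fin m),(0:Fin n)) S else S) := by
            intro S
            split_ifs with htrig
            · exact Or.inr (Set.mem_insert _ _)
            · exact Or.inl (Set.not_nonempty_iff_eq_empty.mp htrig)
          exact key _
        exact ih _ hstep
  · -- strictness witness : {(0,0),(1,1)}
    intro hsub
    set W : Set (Fin m × Fin n) :=
      {((0:Fin m),(0:Fin n)), ((1:Fin m),(1:Fin n))} with hW
    have hWvalid : W ∈ {T : Set (Fin m × Fin n) |
        T ∩ F = ∅ ∨ ((0 : Fin m), (0 : Fin n)) ∈ T} :=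
      Or.inr (Set.mem_insert _ _)
    obtain ⟨w, hw⟩ := hsub hWvalid
    have hconn : conn W := hw ▸ conn_mrun hF w conn_empty
    have h1m : (1 : Fin m) ≠ 0 := by
      intro h; rw [Fin.one_eq_zero_iff] at h; omega
    have h1n : (1 : Fin n) ≠ 0 := by
      intro h; rw [Fin.one_eq_zero_iff] at h; omega
    have hchain := hconn (Set.mem_insert _ _)
      (Set.mem_insert_of_mem _ (Set.mem_singleton _))
    have haux : ∀ x, Relation.ReflTransGen (rel W) ((0:Fin m),(0:Fin n)) x →
        x = ((0:Fin m),(0:Fin n)) := by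
      intro x hx
      induction hx with
      | refl => rfl
      | tail _ step ih =>
        rename_i b c _
        subst ih
        obtain ⟨_, hc, hbc⟩ := step
        rcases Set.mem_insert_iff.mp hc with rfl | hc
        · rfl
        · rw [Set.mem_singleton_iff] at hc
          subst hc
          rcases hbc with e | e
          · exact absurd e.symm h1m
          · exact absurd e.symm h1n
    have := haux _ hchain
    simp only [Prod.mk.injEq] at this
    exact h1m this.1
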